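/- arXiv:2405.03529 — 3 statements merged into one kernel-verified Lean document; each statement's English description precedes it below -/
import Mathlib

section
/- For all integers v ≥ 1 and 2 ≤ λ ≤ v+1, the sum ∑_{ℓ=λ-1}^{v} (v-ℓ+1) · (ℓ-1)!/(ℓ-λ+1)! equals (v+1)!/((v-λ+1)! · λ · (λ-1)). -/
open Finset

lemma hockey (m : ℕ) : ∀ N : ℕ, ∑ k ∈ range (N+1),
    ((Nat.factorial (m+k) : ℝ)) / (Nat.factorial k : ℝ) =
    (Nat.factorial (m+N+1) : ℝ) / ((Nat.factorial N : ℝ) * ((m:ℝ)+1)) := by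
  intro N
  induction N with
  | zero =>
    simp [Nat.factorial_succ]
    field_simp
  | succ N ih =>
    rw [Finset.sum_range_succ, ih]
    have e1 : m + (N+1) = (m+N) + 1 := by ring
    have e2 : m + N + 1 + 1 = (m+N+1) + 1 := rfl
    rw [e1, e2, Nat.factorial_succ (m+N+1), Nat.factorial_succ N, Nat.factorial_succ (m+N)]
    have h0 : (Nat.factorial (m+N) : ℝ) ≠ 0 := by positivity
    have h1 : (Nat.factorial N : ℝ) ≠ 0 := by positivity
    have h2 : ((m:ℝ)+1) ≠ 0 := by positivity
    field_simp
    push_cast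
    ring

lemma mainL (m : ℕ) : ∀ n : ℕ, ∑ k ∈ range (n+1),
    ((n+1-k : ℕ) : ℝ) * (Nat.factorial (m+k) : ℝ) / (Nat.factorial k : ℝ) =
    (Nat.factorial (n+m+2) : ℝ) / ((Nat.factorial n : ℝ) * (((m:ℝ)+2) * ((m:ℝ)+1))) := by
  intro n
  induction n with
  | zero =>
    simp
    rw [show m+2 = (m+1)+1 from rfl, Nat.factorial_succ, Nat.factorial_succ]
    have h2 : ((m:ℝ)+1) ≠ 0 := by positivity
    have h3 : ((m:ℝ)+2) ≠ 0 := by positivity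
    field_simp
    push_cast
    ring
  | succ n ih =>
    have split : ∀ k ∈ range (n+2), ((n+1+1-k : ℕ) : ℝ) * (Nat.factorial (m+k) : ℝ) / (Nat.factorial k : ℝ)
        = ((n+1-k : ℕ) : ℝ) * (Nat.factorial (m+k) : ℝ) / (Nat.factorial k : ℝ)
          + (Nat.factorial (m+k) : ℝ) / (Nat.factorial k : ℝ) := by
      intro k hk
      simp only [Finset.mem_range] at hk
      have h : ((n+1+1-k : ℕ) : ℝ) = ((n+1-k : ℕ) : ℝ) + 1 := by
        have : n+1+1-k = (n+1-k) + 1 := by omega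
        rw [this]; push_cast; ring
      rw [h]; ring
    rw [show n+1+1 = (n+1)+1 from rfl] at split ⊢
    rw [Finset.sum_congr rfl split, Finset.sum_add_distrib]
    rw [Finset.sum_range_succ
      (fun k => ((n+1-k : ℕ) : ℝ) * (Nat.factorial (m+k) : ℝ) / (Nat.factorial k : ℝ)), ih]
    simp only [Nat.sub_self, Nat.cast_zero, zero_mul, zero_div, add_zero]
    rw [hockey m (n+1)]
    have e2 : n+1+m+2 = (n+m+2)+1 := by ring
    have e3 : m+(n+1)+1 = (n+m+2) := by ring
    rw [e2, e3, Nat.factorial_succ (n+m+2), Nat.factorial_succ n]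
    have h0 : (Nat.factorial (n+m+2) : ℝ) ≠ 0 := by positivity
    have h1 : (Nat.factorial n : ℝ) ≠ 0 := by positivity
    have h2 : ((m:ℝ)+1) ≠ 0 := by positivity
    have h3 : ((m:ℝ)+2) ≠ 0 := by positivity
    field_simp
    push_cast
    ring

theorem gosper_sum_identity (v lam : ℕ) (hv : 1 ≤ v) (hlam : 2 ≤ lam) (hlamv : lam ≤ v + 1) :
    ∑ ℓ ∈ Finset.Icc (lam - 1) v,
        ((v + 1 - ℓ : ℕ) : ℝ) * (Nat.factorial (ℓ - 1) : ℝ) / (Nat.factorial (ℓ + 1 - lam) : ℝ) =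
      (Nat.factorial (v + 1) : ℝ) /
        ((Nat.factorial (v + 1 - lam) : ℝ) * (lam : ℝ) * ((lam : ℝ) - 1)) := by
  obtain ⟨m, rfl⟩ : ∃ m, lam = m + 2 := ⟨lam - 2, by omega⟩
  obtain ⟨n, hn⟩ : ∃ n, v = n + m + 1 := ⟨v - m - 1, by omega⟩
  subst hn
  rw [← Finset.Ico_add_one_right_eq_Icc, Finset.sum_Ico_eq_sum_range]
  have hr : ∀ k ∈ range (n+m+1+1-(m+2-1)),
      ((n+m+1+1-(m+2-1+k) : ℕ) : ℝ) * (Nat.factorial (m+2-1+k-1) : ℝ) / (Nat.factorial (m+2-1+k+1-(m+2)) : ℝ)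
      = ((n+1-k : ℕ) : ℝ) * (Nat.factorial (m+k) : ℝ) / (Nat.factorial k : ℝ) := by
    intro k hk
    simp only [Finset.mem_range] at hk
    rw [show m+2-1+k-1 = m+k by omega, show m+2-1+k+1-(m+2) = k by omega,
      show n+m+1+1-(m+2-1+k) = n+1-k by omega]
  rw [Finset.sum_congr rfl hr]
  rw [show n+m+1+1-(m+2-1) = n+1 by omega, mainL m n]
  rw [show n+m+1+1-(m+2) = n by omega, show n+m+1+1 = n+m+2 from rfl]
  push_cast
  ring_nf
end

section
/- For every integer n ≥ 1 and every multi-index ν ∈ ℕ₀^k with |ν| = n, the sum over λ = 1 to n of (λ-1)! · S(n,λ), where S denotes the Stirling numbers of the second kind, is at most n!/(log 2)^n. -/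
open Finset

/-- Stirling numbers of the second kind. -/
def stirlingSecond : ℕ → ℕ → ℕ
  | 0, 0 => 1
  | 0, _ + 1 => 0
  | _ + 1, 0 => 0
  | n + 1, k + 1 => (k + 1) * stirlingSecond n (k + 1) + stirlingSecond n k

/-- `l! * S(n,l)`, the number of surjections from an `n`-set onto an `l`-set. -/
def obG (n l : ℕ) : ℕ := l.factorial * stirlingSecond n l

lemma obG_rec (n l : ℕ) : obG (n+1) (l+1) = (l+1) * (obG n (l+1) + obG n l) := by
  simp only [obG, stirlingSecond, Nat.factorial_succ]
  ring

lemma obG_succ_zero (n : ℕ) : obG (n+1) 0 = 0 := by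
  simp [obG, stirlingSecond]

lemma stirling_eq_zero_of_lt : ∀ n l, n < l → stirlingSecond n l = 0 := by
  intro n
  induction n with
  | zero =>
    intro l hl
    match l, hl with
    | l + 1, _ => rfl
  | succ n ih =>
    intro l hl
    match l, hl with
    | l + 1, hl =>
      have h1 : stirlingSecond n (l+1) = 0 := ih _ (by omega)
      have h2 : stirlingSecond n l = 0 := ih _ (by omega)
      simp [stirlingSecond, h1, h2]

lemma obG_eq_zero_of_lt {n l : ℕ} (h : n < l) : obG n l = 0 := by
  simp [obG, stirling_eq_zero_of_lt n l h]

lemma obG_key : ∀ n l, obG n (l+1) = ∑ j ∈ range n, n.choose j * obG j l := by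
  intro n
  induction n with
  | zero =>
    intro l
    simp [obG, stirlingSecond]
  | succ n ih =>
    intro l
    have hBC : (∑ i ∈ range n, n.choose (i+1) * obG (i+1) l) + obG 0 l
        = obG n (l+1) + obG n l := by
      have h0 : (∑ i ∈ range n, n.choose (i+1) * obG (i+1) l) + obG 0 l
          = ∑ j ∈ range (n+1), n.choose j * obG j l := by
        rw [Finset.sum_range_succ']
        simp
      rw [h0, Finset.sum_range_succ, ← ih, Nat.choose_self, one_mul]
    have hmain : ∑ j ∈ range (n+1), (n+1).choose j * obG j l
        = (∑ i ∈ range n, n.choose i * obG (i+1) l) + (obG n (l+1) + obG n l) := by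
      rw [Finset.sum_range_succ']
      have hsplit : ∀ i ∈ range n, (n+1).choose (i+1) * obG (i+1) l
          = n.choose i * obG (i+1) l + n.choose (i+1) * obG (i+1) l := fun i _ => by
        rw [Nat.choose_succ_succ]; ring
      rw [Finset.sum_congr rfl hsplit, Finset.sum_add_distrib, Nat.choose_zero_right,
        one_mul, add_assoc, hBC]
    rw [hmain]
    cases l with
    | zero =>
      have hz : ∑ i ∈ range n, n.choose i * obG (i+1) 0 = 0 := by
        simp [obG_succ_zero]
      rw [hz, obG_rec]
      ring
    | succ m =>
      have hs : ∑ i ∈ range n, n.choose i * obG (i+1) (m+1)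
          = (m+1) * (obG n (m+2) + obG n (m+1)) := by
        have h1 : ∀ i ∈ range n, n.choose i * obG (i+1) (m+1)
            = (m+1) * (n.choose i * obG i (m+1) + n.choose i * obG i m) := fun i _ => by
          rw [obG_rec]; ring
        rw [Finset.sum_congr rfl h1, ← Finset.mul_sum, Finset.sum_add_distrib, ← ih, ← ih]
      rw [hs, obG_rec]
      ring

/-- Fubini (ordered Bell) numbers. -/
def obF (n : ℕ) : ℕ := ∑ l ∈ range (n+1), obG n l

lemma obF_partial {n j : ℕ} (hj : j ≤ n) : ∑ l ∈ range (n+1), obG j l = obF j := by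
  unfold obF
  symm
  apply Finset.sum_subset (Finset.range_subset_range.mpr (by omega))
  intro x _ hx
  exact obG_eq_zero_of_lt (by simp at hx; omega)

lemma obF_rec (n : ℕ) : obF (n+1) = ∑ j ∈ range (n+1), (n+1).choose j * obF j := by
  unfold obF
  rw [Finset.sum_range_succ']
  rw [Finset.sum_congr rfl fun l _ => obG_key (n+1) l, obG_succ_zero, add_zero,
    Finset.sum_comm]
  refine Finset.sum_congr rfl fun j hj => ?_
  rw [← Finset.mul_sum]
  congr 1
  exact obF_partial (by simp at hj; omega)

lemma obF_le (n : ℕ) : (obF n : ℝ) ≤ n.factorial / (Real.log 2) ^ n := by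
  have hc : (0:ℝ) < Real.log 2 := Real.log_pos (by norm_num)
  induction n using Nat.strong_induction_on with
  | _ n IH =>
    match n with
    | 0 =>
      have : obF 0 = 1 := by decide
      simp [this]
    | m + 1 =>
      rw [obF_rec]
      push_cast
      have step1 : ∑ j ∈ range (m+1), ((m+1).choose j : ℝ) * (obF j : ℝ)
          ≤ ∑ j ∈ range (m+1), ((m+1).choose j : ℝ) * ((j.factorial : ℝ) / (Real.log 2) ^ j) := by
        refine Finset.sum_le_sum fun j hj => ?_
        have := IH j (by simp at hj; omega)
        exact mul_le_mul_of_nonneg_left this (by positivity)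
      refine step1.trans ?_
      have step2 : ∑ j ∈ range (m+1), ((m+1).choose j : ℝ) * ((j.factorial : ℝ) / (Real.log 2) ^ j)
          = ((m+1).factorial : ℝ) / (Real.log 2) ^ (m+1)
            * ∑ j ∈ range (m+1), (Real.log 2) ^ (m+1-j) / ((m+1-j).factorial : ℝ) := by
        rw [Finset.mul_sum]
        refine Finset.sum_congr rfl fun j hj => ?_
        have hjm : j ≤ m + 1 := by simp at hj; omega
        have hid : ((m+1).choose j : ℝ) * (j.factorial : ℝ) * ((m+1-j).factorial : ℝ)
            = ((m+1).factorial : ℝ) := by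
          exact_mod_cast Nat.choose_mul_factorial_mul_factorial hjm
        have hpow : (Real.log 2) ^ (m+1) = (Real.log 2) ^ j * (Real.log 2) ^ (m+1-j) := by
          rw [← pow_add]
          congr 1
          omega
        have hf1 : ((m+1-j).factorial : ℝ) ≠ 0 := by positivity
        have hne : (Real.log 2 : ℝ) ≠ 0 := ne_of_gt hc
        field_simp [hpow]
        linear_combination ((Real.log 2) ^ j * (Real.log 2) ^ (m + 1 - j)) * hid + (((m+1).choose j : ℝ) * (j.factorial : ℝ) * ((m+1-j).factorial : ℝ)) * hpow
      rw [step2]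
      have step3 : ∑ j ∈ range (m+1), (Real.log 2) ^ (m+1-j) / ((m+1-j).factorial : ℝ) ≤ 1 := by
        have hrefl : ∑ j ∈ range (m+1), (Real.log 2) ^ (m+1-j) / ((m+1-j).factorial : ℝ)
            = ∑ i ∈ range (m+1), (Real.log 2) ^ (i+1) / ((i+1).factorial : ℝ) := by
          rw [← Finset.sum_range_reflect (fun i => (Real.log 2) ^ (i+1) / ((i+1).factorial : ℝ)) (m+1)]
          refine Finset.sum_congr rfl fun j hj => ?_
          have h : m + 1 - 1 - j + 1 = m + 1 - j := by simp at hj; omega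
          simp only [h]
        rw [hrefl]
        have hexp := Real.sum_le_exp_of_nonneg hc.le (m+2)
        rw [Finset.sum_range_succ'] at hexp
        simp only [pow_zero, Nat.factorial_zero] at hexp
        rw [Real.exp_log (by norm_num)] at hexp
        have : (1:ℝ)/1 = 1 := by norm_num
        linarith
      calc ((m+1).factorial : ℝ) / (Real.log 2) ^ (m+1)
            * ∑ j ∈ range (m+1), (Real.log 2) ^ (m+1-j) / ((m+1-j).factorial : ℝ)
          ≤ ((m+1).factorial : ℝ) / (Real.log 2) ^ (m+1) * 1 := by
            apply mul_le_mul_of_nonneg_left step3 (by positivity)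
        _ = ((m+1).factorial : ℝ) / (Real.log 2) ^ (m+1) := by ring
        _ = (((m+1).factorial : ℕ) : ℝ) / (Real.log 2) ^ (m+1) := by push_cast; ring

theorem ordered_bell_bound {k : ℕ} (n : ℕ) (hn : 1 ≤ n) (ν : Fin k → ℕ)
    (hν : ∑ j, ν j = n) :
    ∑ lam ∈ Finset.Icc 1 n, (Nat.factorial (lam - 1) : ℝ) * (stirlingSecond n lam : ℝ) ≤
      (Nat.factorial n : ℝ) / (Real.log 2) ^ n := by
  have h1 : ∑ lam ∈ Finset.Icc 1 n, (Nat.factorial (lam - 1) : ℝ) * (stirlingSecond n lam : ℝ)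
      ≤ ∑ lam ∈ Finset.Icc 1 n, (obG n lam : ℝ) := by
    refine Finset.sum_le_sum fun lam _ => ?_
    unfold obG
    push_cast
    apply mul_le_mul_of_nonneg_right _ (by positivity)
    exact_mod_cast Nat.factorial_le (by omega)
  refine h1.trans ?_
  have h2 : ∑ lam ∈ Finset.Icc 1 n, obG n lam ≤ obF n := by
    unfold obF
    apply Finset.sum_le_sum_of_subset
    intro x hx
    simp at hx ⊢
    omega
  calc ∑ lam ∈ Finset.Icc 1 n, (obG n lam : ℝ) = ((∑ lam ∈ Finset.Icc 1 n, obG n lam : ℕ) : ℝ) := by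
        push_cast; ring
    _ ≤ (obF n : ℝ) := by exact_mod_cast h2
    _ ≤ _ := obF_le n
end

section
/- Cramér's inequality: for every integer ν ≥ 0 and every real x, the absolute value of the ν-th derivative of e^{-x²/2} is at most 1.1 · √(ν!). -/
open Real Complex MeasureTheory FourierTransform Set

lemma cramer_aux_fact (n : ℕ) :
    (2:ℝ) ^ ((n:ℝ)/2) * Real.Gamma (((n:ℝ)+1)/2) / Real.sqrt π ≤
      1.1 * Real.sqrt (Nat.factorial n) := by
  induction n using Nat.twoStepInduction with
  | zero =>
    simp only [Nat.cast_zero, zero_div, Real.rpow_zero, one_mul, zero_add,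
      Real.Gamma_one_half_eq, Nat.factorial_zero, Nat.cast_one, Real.sqrt_one, mul_one]
    rw [div_self (Real.sqrt_ne_zero'.2 Real.pi_pos)]
    norm_num
  | one =>
    simp only [Nat.cast_one, Nat.factorial_one, Real.sqrt_one, mul_one]
    rw [show ((1:ℝ)+1)/2 = 1 by norm_num, Real.Gamma_one, mul_one, div_le_iff₀
      (Real.sqrt_pos.2 Real.pi_pos)]
    calc (2:ℝ) ^ ((1:ℝ)/2) = Real.sqrt 2 := by
          rw [Real.sqrt_eq_rpow]
      _ ≤ Real.sqrt π := Real.sqrt_le_sqrt (by linarith [Real.pi_gt_three])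
      _ ≤ 1.1 * Real.sqrt π := by nlinarith [Real.sqrt_nonneg π]
  | more n ih _ =>
    have hπ : (0:ℝ) < Real.sqrt π := Real.sqrt_pos.2 Real.pi_pos
    have hs : ((n:ℝ)+1)/2 ≠ 0 := by positivity
    have hgam : Real.Gamma (((n:ℝ)+2+1)/2) = (((n:ℝ)+1)/2) * Real.Gamma (((n:ℝ)+1)/2) := by
      rw [show ((n:ℝ)+2+1)/2 = ((n:ℝ)+1)/2 + 1 by ring, Real.Gamma_add_one hs]
    have hpow : (2:ℝ) ^ (((n:ℝ)+2)/2) = 2 * (2:ℝ) ^ ((n:ℝ)/2) := by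
      rw [show ((n:ℝ)+2)/2 = (n:ℝ)/2 + 1 by ring, Real.rpow_add two_pos, Real.rpow_one]
      ring
    have key : (2:ℝ) ^ (((n:ℝ)+2)/2) * Real.Gamma (((n:ℝ)+2+1)/2) / Real.sqrt π
        = ((n:ℝ)+1) * ((2:ℝ) ^ ((n:ℝ)/2) * Real.Gamma (((n:ℝ)+1)/2) / Real.sqrt π) := by
      rw [hgam, hpow]; ring
    push_cast
    rw [key]
    have h2 : ((n:ℝ)+1) * ((2:ℝ) ^ ((n:ℝ)/2) * Real.Gamma (((n:ℝ)+1)/2) / Real.sqrt π)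
        ≤ ((n:ℝ)+1) * (1.1 * Real.sqrt (Nat.factorial n)) := by
      apply mul_le_mul_of_nonneg_left ih (by positivity)
    refine h2.trans ?_
    have h3 : ((n:ℝ)+1) * Real.sqrt (Nat.factorial n) ≤ Real.sqrt (Nat.factorial (n+2)) := by
      have : ((n:ℝ)+1) * Real.sqrt (Nat.factorial n)
          = Real.sqrt (((n:ℝ)+1)^2 * (Nat.factorial n)) := by
        rw [Real.sqrt_mul (by positivity), Real.sqrt_sq (by positivity)]
      rw [this]
      apply Real.sqrt_le_sqrt
      have : (Nat.factorial (n+2) : ℝ) = ((n:ℝ)+2) * ((n:ℝ)+1) * (Nat.factorial n) := by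
        rw [Nat.factorial_succ, Nat.factorial_succ]; push_cast; ring
      rw [this]
      nlinarith [(by exact_mod_cast Nat.factorial_pos n : (0:ℝ) < (Nat.factorial n : ℝ))]
    push_cast
    nlinarith [Real.sqrt_nonneg (Nat.factorial n), (by exact_mod_cast Nat.factorial_pos n : (0:ℝ) < (Nat.factorial n : ℝ))]

noncomputable def g0 : ℝ → ℂ := fun t => Complex.exp (-((2*π^2 : ℝ) : ℂ) * t^2)

lemma g0_fourier : 𝓕 g0 = fun t : ℝ => 1/((2*π : ℂ)) ^ ((1:ℂ)/2) * Complex.exp (-(t:ℂ)^2/2) := by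
  have h := fourier_gaussian_pi (b := (2*π : ℂ)) (by simp [Real.pi_pos])
  have hg : g0 = fun x : ℝ => Complex.exp (-(π:ℂ) * (2*π) * x^2) := by
    funext x; unfold g0; push_cast; ring_nf
  rw [hg, h]
  funext t
  congr 1
  have hπ : (π:ℂ) ≠ 0 := Complex.ofReal_ne_zero.2 Real.pi_ne_zero
  rw [show -(π:ℂ)/(2*π) = -(1:ℂ)/2 by field_simp]
  ring_nf

noncomputable def gg : ℝ → ℂ := (((Real.sqrt (2*π) : ℝ) : ℂ)) • g0

lemma gg_fourier : 𝓕 gg = fun x : ℝ => ((Real.exp (-x^2/2) : ℝ) : ℂ) := by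
  have hsmul : 𝓕 gg = ((Real.sqrt (2*π) : ℝ) : ℂ) • 𝓕 g0 :=
    VectorFourier.fourierIntegral_const_smul _ _ _ _ _
  rw [hsmul, g0_fourier]
  funext x
  have h2π : (0:ℝ) < 2*π := by positivity
  have hc : ((Real.sqrt (2*π) : ℝ) : ℂ) = ((2*π : ℂ)) ^ ((1:ℂ)/2) := by
    rw [Real.sqrt_eq_rpow, Complex.ofReal_cpow h2π.le]
    push_cast
    norm_num
  have hne : ((2*π : ℂ)) ^ ((1:ℂ)/2) ≠ 0 := by
    simp only [ne_eq, Complex.cpow_eq_zero_iff, not_and_or, not_not]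
    left
    simpa using Real.pi_ne_zero
  simp only [Pi.smul_apply, smul_eq_mul, hc]
  rw [← mul_assoc, mul_one_div, div_self hne, one_mul]
  rw [Complex.ofReal_exp]
  push_cast
  ring_nf

lemma gg_norm (t : ℝ) : ‖gg t‖ = Real.sqrt (2*π) * Real.exp (-(2*π^2) * t^2) := by
  unfold gg g0
  simp only [Pi.smul_apply, smul_eq_mul, norm_mul, Complex.norm_real]
  rw [norm_cexp_neg_mul_sq]
  rw [Real.norm_eq_abs, _root_.abs_of_nonneg (Real.sqrt_nonneg _), Complex.ofReal_re]

lemma gg_int (n : ℕ) : Integrable (fun t : ℝ => t ^ n • gg t) := by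
  have hb : (0:ℝ) < 2*π^2 := by positivity
  have key : Integrable (fun t : ℝ => t ^ n * Real.exp (-(2*π^2) * t ^ 2)) := by
    have := integrable_rpow_mul_exp_neg_mul_sq hb (s := (n:ℝ))
      (by exact lt_of_lt_of_le (by norm_num) (Nat.cast_nonneg n))
    simpa [Real.rpow_natCast] using this
  have maj : Integrable (fun t : ℝ => Real.sqrt (2*π) * |t ^ n * Real.exp (-(2*π^2) * t ^ 2)|) :=
    (key.abs.const_mul _)
  apply maj.mono'
  · apply Continuous.aestronglyMeasurable
    unfold gg g0
    simp only [Pi.smul_apply, smul_eq_mul]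
    fun_prop
  · filter_upwards with t
    rw [norm_smul, gg_norm]
    simp only [norm_pow, Real.norm_eq_abs, abs_mul, _root_.abs_pow,
      _root_.abs_of_nonneg (Real.exp_pos _).le]
    apply le_of_eq
    ring

lemma scalar_id (ν : ℕ) :
    2 * ((2*π)^ν * Real.sqrt (2*π)) * ((2*π^2) ^ (-(((ν:ℝ))+1)/2) * (1/2)) =
      (2:ℝ) ^ ((ν:ℝ)/2) / Real.sqrt π := by
  have hπ := Real.pi_pos
  set a : ℝ := (ν:ℝ) with ha
  have h2π : (0:ℝ) < 2*π := by positivity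
  rw [Real.sqrt_eq_rpow, Real.sqrt_eq_rpow]
  rw [← Real.rpow_natCast (2*π) ν, ← ha, ← Real.rpow_add h2π]
  rw [Real.mul_rpow (by norm_num) hπ.le, Real.mul_rpow (by norm_num) (by positivity)]
  rw [← Real.rpow_natCast π 2, ← Real.rpow_mul hπ.le]
  push_cast
  rw [show (2:ℝ) * (2 ^ (a + 1 / 2) * π ^ (a + 1 / 2)) *
      (2 ^ (-(a + 1) / 2) * π ^ ((2:ℝ) * (-(a + 1) / 2)) * (1 / 2)) =
      (2 ^ (-(a + 1) / 2) * 2 ^ (a + 1/2)) * (π ^ ((2:ℝ) * (-(a + 1) / 2)) * π ^ (a + 1 / 2))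
      by ring]
  rw [← Real.rpow_add two_pos, ← Real.rpow_add hπ]
  rw [show -(a + 1) / 2 + (a + 1 / 2) = a/2 by ring,
    show (2:ℝ) * (-(a + 1) / 2) + (a + 1 / 2) = -(1/2) by ring]
  rw [Real.rpow_neg hπ.le, ← div_eq_mul_inv]

lemma cramer_norm_int (ν : ℕ) :
    ∫ t : ℝ, ‖(-2*(π:ℂ)*Complex.I*(t:ℂ))^ν • gg t‖ =
      (2:ℝ)^((ν:ℝ)/2) * Real.Gamma (((ν:ℝ)+1)/2) / Real.sqrt π := by
  have hb : (0:ℝ) < 2*π^2 := by positivity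
  have hπ := Real.pi_pos
  have hpt : ∀ t : ℝ, ‖(-2*(π:ℂ)*Complex.I*(t:ℂ))^ν • gg t‖ =
      (fun y : ℝ => (2*π)^ν * y^ν * (Real.sqrt (2*π) * Real.exp (-(2*π^2)*y^2))) |t| := by
    intro t
    rw [norm_smul, norm_pow, gg_norm]
    simp only [norm_mul, norm_neg, Complex.norm_real, Complex.norm_I, Real.norm_eq_abs]
    rw [abs_of_pos hπ, _root_.sq_abs, show ‖(2:ℂ)‖ = 2 by norm_num]
    ring
  simp_rw [hpt]
  rw [integral_comp_abs
    (f := fun y : ℝ => (2*π)^ν * y^ν * (Real.sqrt (2*π) * Real.exp (-(2*π^2)*y^2)))]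
  have hI : ∫ x in Set.Ioi (0:ℝ), (2*π)^ν * x^ν * (Real.sqrt (2*π) * Real.exp (-(2*π^2)*x^2)) =
      ((2*π)^ν * Real.sqrt (2*π)) *
        ((2*π^2) ^ (-(((ν:ℝ))+1)/2) * (1/2) * Real.Gamma (((ν:ℝ)+1)/2)) := by
    have base : ∫ x in Set.Ioi (0:ℝ), x^ν * Real.exp (-(2*π^2)*x^2) =
        (2*π^2) ^ (-(((ν:ℝ))+1)/2) * (1/2) * Real.Gamma (((ν:ℝ)+1)/2) := by
      have h := integral_rpow_mul_exp_neg_mul_rpow (p := 2) (q := (ν:ℝ)) (b := 2*π^2)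
        two_pos (by exact lt_of_lt_of_le (by norm_num) (Nat.cast_nonneg ν)) hb
      rw [show ((ν:ℝ)+1)/2 = ((ν:ℝ)+1)/2 from rfl] at h
      rw [← h]
      refine setIntegral_congr_fun measurableSet_Ioi (fun x hx => ?_)
      rw [← Real.rpow_natCast x ν, ← Real.rpow_natCast x 2]
      norm_num
    calc ∫ x in Set.Ioi (0:ℝ), (2*π)^ν * x^ν * (Real.sqrt (2*π) * Real.exp (-(2*π^2)*x^2))
        = ∫ x in Set.Ioi (0:ℝ), ((2*π)^ν * Real.sqrt (2*π)) * (x^ν * Real.exp (-(2*π^2)*x^2)) := by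
          congr 1; funext x; ring
      _ = ((2*π)^ν * Real.sqrt (2*π)) * ∫ x in Set.Ioi (0:ℝ), x^ν * Real.exp (-(2*π^2)*x^2) :=
          MeasureTheory.integral_const_mul _ _
      _ = _ := by rw [base]
  rw [hI]
  have := scalar_id ν
  calc 2 * (((2*π)^ν * Real.sqrt (2*π)) *
        ((2*π^2) ^ (-(((ν:ℝ))+1)/2) * (1/2) * Real.Gamma (((ν:ℝ)+1)/2)))
      = (2 * ((2*π)^ν * Real.sqrt (2*π)) * ((2*π^2) ^ (-(((ν:ℝ))+1)/2) * (1/2))) *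
        Real.Gamma (((ν:ℝ)+1)/2) := by ring
    _ = ((2:ℝ) ^ ((ν:ℝ)/2) / Real.sqrt π) * Real.Gamma (((ν:ℝ)+1)/2) := by rw [this]
    _ = _ := by ring

theorem cramer_inequality (ν : ℕ) (x : ℝ) :
    |iteratedDeriv ν (fun t : ℝ => Real.exp (-t ^ 2 / 2)) x| ≤
      1.1 * Real.sqrt (Nat.factorial ν) := by
  set f : ℝ → ℝ := fun t : ℝ => Real.exp (-t ^ 2 / 2) with hfdef
  have hf : ContDiff ℝ ⊤ f := by
    exact Real.contDiff_exp.comp ((contDiff_id.pow 2).neg.div_const 2)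
  have hcomp : (⇑(RCLike.ofRealLI (K := ℂ)) ∘ f) = 𝓕 gg := by
    rw [gg_fourier]
    funext t
    show ((f t : ℝ) : ℂ) = _
    rw [hfdef]
  have h1 : |iteratedDeriv ν f x| = ‖iteratedDeriv ν (𝓕 gg) x‖ := by
    rw [← Real.norm_eq_abs, ← norm_iteratedFDeriv_eq_norm_iteratedDeriv,
      ← norm_iteratedFDeriv_eq_norm_iteratedDeriv, ← hcomp,
      LinearIsometry.norm_iteratedFDeriv_comp_left _ hf.contDiffAt le_top]
  have h2 : iteratedDeriv ν (𝓕 gg) = 𝓕 (fun t : ℝ => (-2*(π:ℂ)*Complex.I*(t:ℂ))^ν • gg t) :=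
    Real.iteratedDeriv_fourier (N := (ν : ℕ∞)) (fun n _ => gg_int n) le_rfl
  have h3 : ‖𝓕 (fun t : ℝ => (-2*(π:ℂ)*Complex.I*(t:ℂ))^ν • gg t) x‖ ≤
      ∫ t : ℝ, ‖(-2*(π:ℂ)*Complex.I*(t:ℂ))^ν • gg t‖ :=
    VectorFourier.norm_fourierIntegral_le_integral_norm _ _ _ _ _
  rw [h1, h2]
  refine h3.trans ?_
  rw [cramer_norm_int]
  exact cramer_aux_fact ν
end
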